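/- Let $S = I_1 + I_2 + \cdots + I_n$ be a sum of independent Bernoulli random indicators with $\mathbb{P}(I_i = 1) = p_i$, and let $\Lambda$ be a Poisson random variable with mean $p_1 + \cdots + p_n$. Then the total variation distance between the distribution of $S$ and the distribution of $\Lambda$ is at most $2\sum_i p_i^2$. -/

import Mathlib

set_option maxHeartbeats 1000000

open MeasureTheory ProbabilityTheory Real
open scoped ENNReal NNReal

namespace LeCamAux


noncomputable def conv (f g : ℕ → ℝ≥0∞) (n : ℕ) : ℝ≥0∞ :=
  ∑ k ∈ Finset.range (n + 1), f k * g (n - k)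

noncomputable def dd (f g : ℕ → ℝ≥0∞) : ℝ≥0∞ :=
  ∑' k, ((f k - g k) + (g k - f k))

noncomputable def pois (r : ℝ≥0) (k : ℕ) : ℝ≥0∞ := ENNReal.ofReal (poissonPMFReal r k)

noncomputable def bern (q : ℝ≥0) (k : ℕ) : ℝ≥0∞ :=
  if k = 0 then 1 - (q : ℝ≥0∞) else if k = 1 then (q : ℝ≥0∞) else 0

lemma tsum_conv_aux (a : ℕ → ℕ → ℝ≥0∞) :
    ∑' n, ∑ k ∈ Finset.range (n + 1), a k (n - k) = ∑' k, ∑' m, a k m := by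
  have h1 : ∀ n, ∑ k ∈ Finset.range (n + 1), a k (n - k)
      = ∑' k, if k ≤ n then a k (n - k) else 0 := by
    intro n
    rw [tsum_eq_sum (s := Finset.range (n + 1)) (fun k hk =>
      if_neg fun h : k ≤ n => hk (Finset.mem_range.mpr (Nat.lt_succ_of_le h)))]
    exact Finset.sum_congr rfl fun k hk =>
      (if_pos (Nat.lt_succ_iff.mp (Finset.mem_range.mp hk))).symm
  simp_rw [h1]
  rw [ENNReal.tsum_comm]
  refine tsum_congr fun k => ?_
  have hinj : Function.Injective (fun m : ℕ => m + k) := add_left_injective k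
  have := hinj.tsum_eq (f := fun n => if k ≤ n then a k (n - k) else 0) ?_
  · rw [← this]
    refine tsum_congr fun m => ?_
    simp
  · intro n hn
    simp only [Function.mem_support, ne_eq, ite_eq_right_iff, not_forall] at hn
    obtain ⟨hkn, -⟩ := hn
    exact ⟨n - k, by simpa using Nat.sub_add_cancel hkn⟩

lemma tsum_conv (f g : ℕ → ℝ≥0∞) : ∑' n, conv f g n = (∑' k, f k) * (∑' m, g m) := by
  rw [show (fun n => conv f g n) = fun n => ∑ k ∈ Finset.range (n + 1), f k * g (n - k) from rfl,
    tsum_conv_aux fun k m => f k * g m]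
  simp_rw [ENNReal.tsum_mul_left, ENNReal.tsum_mul_right]

lemma conv_sub_conv_le (f g h : ℕ → ℝ≥0∞) (n : ℕ) :
    conv f h n - conv g h n ≤ ∑ k ∈ Finset.range (n + 1), (f k - g k) * h (n - k) := by
  rw [tsub_le_iff_right]
  calc conv f h n = ∑ k ∈ Finset.range (n + 1), f k * h (n - k) := rfl
    _ ≤ ∑ k ∈ Finset.range (n + 1), ((f k - g k) * h (n - k) + g k * h (n - k)) := by
        refine Finset.sum_le_sum fun k _ => ?_
        rw [← add_mul]
        exact mul_le_mul_left le_tsub_add _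
    _ = _ := by rw [Finset.sum_add_distrib]; rfl

lemma conv_sub_conv_le' (f g h : ℕ → ℝ≥0∞) (n : ℕ) :
    conv h f n - conv h g n ≤ ∑ k ∈ Finset.range (n + 1), h k * (f (n - k) - g (n - k)) := by
  rw [tsub_le_iff_right]
  calc conv h f n = ∑ k ∈ Finset.range (n + 1), h k * f (n - k) := rfl
    _ ≤ ∑ k ∈ Finset.range (n + 1), (h k * (f (n - k) - g (n - k)) + h k * g (n - k)) := by
        refine Finset.sum_le_sum fun k _ => ?_
        rw [← mul_add]
        exact mul_le_mul_right le_tsub_add _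
    _ = _ := by rw [Finset.sum_add_distrib]; rfl

lemma dd_conv_right (f g h : ℕ → ℝ≥0∞) : dd (conv f h) (conv g h) ≤ dd f g * ∑' m, h m := by
  have hpt : ∀ n, (conv f h n - conv g h n) + (conv g h n - conv f h n)
      ≤ ∑ k ∈ Finset.range (n + 1), ((f k - g k) + (g k - f k)) * h (n - k) := by
    intro n
    calc _ ≤ (∑ k ∈ Finset.range (n + 1), (f k - g k) * h (n - k))
        + ∑ k ∈ Finset.range (n + 1), (g k - f k) * h (n - k) :=
          add_le_add (conv_sub_conv_le f g h n) (conv_sub_conv_le g f h n)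
      _ = _ := by rw [← Finset.sum_add_distrib]; exact Finset.sum_congr rfl fun k _ => (add_mul _ _ _).symm
  calc dd (conv f h) (conv g h)
      ≤ ∑' n, ∑ k ∈ Finset.range (n + 1), ((f k - g k) + (g k - f k)) * h (n - k) :=
        ENNReal.tsum_le_tsum hpt
    _ = ∑' k, ∑' m, ((f k - g k) + (g k - f k)) * h m :=
        tsum_conv_aux fun k m => ((f k - g k) + (g k - f k)) * h m
    _ = dd f g * ∑' m, h m := by
        simp_rw [ENNReal.tsum_mul_left]
        rw [dd, ENNReal.tsum_mul_right]

lemma dd_conv_left (f g h : ℕ → ℝ≥0∞) : dd (conv h f) (conv h g) ≤ (∑' m, h m) * dd f g := by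
  have hpt : ∀ n, (conv h f n - conv h g n) + (conv h g n - conv h f n)
      ≤ ∑ k ∈ Finset.range (n + 1), h k * ((f (n - k) - g (n - k)) + (g (n - k) - f (n - k))) := by
    intro n
    calc _ ≤ (∑ k ∈ Finset.range (n + 1), h k * (f (n - k) - g (n - k)))
        + ∑ k ∈ Finset.range (n + 1), h k * (g (n - k) - f (n - k)) :=
          add_le_add (conv_sub_conv_le' f g h n) (conv_sub_conv_le' g f h n)
      _ = _ := by rw [← Finset.sum_add_distrib]; exact Finset.sum_congr rfl fun k _ => (mul_add _ _ _).symm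
  calc dd (conv h f) (conv h g)
      ≤ ∑' n, ∑ k ∈ Finset.range (n + 1), h k * ((f (n - k) - g (n - k)) + (g (n - k) - f (n - k))) :=
        ENNReal.tsum_le_tsum hpt
    _ = ∑' k, ∑' m, h k * ((f m - g m) + (g m - f m)) :=
        tsum_conv_aux fun k m => h k * ((f m - g m) + (g m - f m))
    _ = (∑' m, h m) * dd f g := by
        simp_rw [ENNReal.tsum_mul_left]
        rw [dd, ← ENNReal.tsum_mul_right]

lemma dd_triangle (f g h : ℕ → ℝ≥0∞) : dd f h ≤ dd f g + dd g h := by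
  rw [dd, dd, dd, ← ENNReal.tsum_add]
  refine ENNReal.tsum_le_tsum fun k => ?_
  have key : ∀ a b c : ℝ≥0∞, a - c ≤ (a - b) + (b - c) := by
    intro a b c
    rw [tsub_le_iff_right]
    calc a ≤ (a - b) + b := le_tsub_add
      _ ≤ (a - b) + ((b - c) + c) := add_le_add_right le_tsub_add _
      _ = (a - b) + (b - c) + c := by rw [add_assoc]
  calc (f k - h k) + (h k - f k)
      ≤ ((f k - g k) + (g k - h k)) + ((h k - g k) + (g k - f k)) :=
        add_le_add (key _ _ _) (key _ _ _)
    _ = (f k - g k + (g k - f k)) + (g k - h k + (h k - g k)) := by ring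







lemma key_real (a b : ℝ) (n : ℕ) :
    ∑ k ∈ Finset.range (n + 1),
      (exp (-a) * a ^ k / k.factorial) * (exp (-b) * b ^ (n - k) / (n - k).factorial)
      = exp (-(a + b)) * (a + b) ^ n / n.factorial := by
  rw [add_pow, Finset.mul_sum, Finset.sum_div]
  refine Finset.sum_congr rfl fun k hk => ?_
  have hk' : k ≤ n := Nat.lt_succ_iff.mp (Finset.mem_range.mp hk)
  have hc : ((n.choose k : ℝ)) * k.factorial * (n - k).factorial = n.factorial := by
    exact_mod_cast congrArg (Nat.cast (R := ℝ)) (Nat.choose_mul_factorial_mul_factorial hk')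
  have hexp : exp (-(a + b)) = exp (-a) * exp (-b) := by
    rw [← Real.exp_add]; ring_nf
  have hkf : (k.factorial : ℝ) ≠ 0 := Nat.cast_ne_zero.mpr k.factorial_ne_zero
  have hnkf : ((n - k).factorial : ℝ) ≠ 0 := Nat.cast_ne_zero.mpr (n - k).factorial_ne_zero
  have hnf : (n.factorial : ℝ) ≠ 0 := Nat.cast_ne_zero.mpr n.factorial_ne_zero
  have hexp' : rexp (-b + -a) = rexp (-a) * rexp (-b) := by
    rw [← Real.exp_add]; ring_nf
  field_simp
  rw [hexp]
  linear_combination (-(rexp (-a) * rexp (-b) * a ^ k * b ^ (n - k))) * hc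

lemma pois_conv (a b : ℝ≥0) : conv (pois a) (pois b) = pois (a + b) := by
  funext n
  unfold conv pois
  have h1 : ∀ k ∈ Finset.range (n + 1),
      ENNReal.ofReal (poissonPMFReal a k) * ENNReal.ofReal (poissonPMFReal b (n - k))
      = ENNReal.ofReal (poissonPMFReal a k * poissonPMFReal b (n - k)) :=
    fun k _ => (ENNReal.ofReal_mul poissonPMFReal_nonneg).symm
  rw [Finset.sum_congr rfl h1, ← ENNReal.ofReal_sum_of_nonneg
    (fun k _ => mul_nonneg poissonPMFReal_nonneg poissonPMFReal_nonneg)]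
  congr 1
  have := key_real (a : ℝ) (b : ℝ) n
  unfold poissonPMFReal
  push_cast
  exact this









lemma tsum_pois (r : ℝ≥0) : ∑' k, pois r k = 1 := (poissonPMF r).tsum_coe

lemma tsum_bern (q : ℝ≥0) (hq : q ≤ 1) : ∑' k, bern q k = 1 := by
  rw [tsum_eq_sum (s := {0, 1}) (fun k hk => by
    simp only [Finset.mem_insert, Finset.mem_singleton, not_or] at hk
    simp [bern, hk.1, hk.2])]
  rw [Finset.sum_insert (by simp), Finset.sum_singleton]
  simp only [bern, if_pos rfl, if_neg one_ne_zero, if_pos rfl]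
  exact tsub_add_cancel_of_le (by exact_mod_cast hq)

lemma dd_bern_pois (q : ℝ≥0) (hq : q ≤ 1) : dd (bern q) (pois q) ≤ 2 * (q : ℝ≥0∞) ^ 2 := by
  have hq' : (q : ℝ) ≤ 1 := by exact_mod_cast hq
  have hq0 : (0 : ℝ) ≤ q := q.coe_nonneg
  have hexp1 : 1 - (q : ℝ) ≤ exp (-q) := by nlinarith [Real.add_one_le_exp (-(q : ℝ))]
  have hexp2 : exp (-(q : ℝ)) ≤ 1 := by
    rw [← Real.exp_zero]
    exact Real.exp_le_exp.mpr (by linarith)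
  set d : ℕ → ℝ≥0∞ := fun k => (bern q k - pois q k) + (pois q k - bern q k) with hd
  have hb0 : (1 : ℝ≥0∞) - (q : ℝ≥0∞) = ENNReal.ofReal (1 - q) := by
    rw [ENNReal.ofReal_sub _ hq0]
    simp
  have e0 : d 0 = ENNReal.ofReal (exp (-(q : ℝ)) - (1 - q)) := by
    have hp0 : pois q 0 = ENNReal.ofReal (exp (-(q : ℝ))) := by
      simp [pois, poissonPMFReal]
    have hb0' : bern q 0 = ENNReal.ofReal (1 - (q : ℝ)) := by
      rw [← hb0]; simp [bern]
    simp only [hd]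
    rw [hb0', hp0, tsub_eq_zero_of_le (ENNReal.ofReal_le_ofReal hexp1), zero_add,
      ← ENNReal.ofReal_sub _ (by linarith)]
  have e1 : d 1 = ENNReal.ofReal ((q : ℝ) - q * exp (-(q : ℝ))) := by
    have hp1 : pois q 1 = ENNReal.ofReal ((q : ℝ) * exp (-(q : ℝ))) := by
      simp [pois, poissonPMFReal]
      rw [mul_comm (rexp _), ENNReal.ofReal_mul hq0, ENNReal.ofReal_coe_nnreal]
    have hb1 : bern q 1 = ENNReal.ofReal (q : ℝ) := by simp [bern]
    have hle : ENNReal.ofReal ((q : ℝ) * exp (-(q : ℝ))) ≤ ENNReal.ofReal (q : ℝ) :=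
      ENNReal.ofReal_le_ofReal (by nlinarith)
    simp only [hd]
    rw [hb1, hp1, tsub_eq_zero_of_le hle, add_zero,
      ← ENNReal.ofReal_sub _ (by positivity)]
  have e2 : ∀ k, d (k + 2) = ENNReal.ofReal (poissonPMFReal q (k + 2)) := by
    intro k
    have hbk : bern q (k + 2) = 0 := by
      simp only [bern]
      rw [if_neg (by omega), if_neg (by omega)]
    simp only [hd]
    rw [hbk, zero_tsub, tsub_zero, zero_add]
    rfl
  -- split the ENNReal sum
  have hsplit : dd (bern q) (pois q) = d 0 + d 1 + ∑' k, d (k + 2) := by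
    rw [dd, ← hd]
    rw [tsum_eq_zero_add' (f := d) ENNReal.summable,
      tsum_eq_zero_add' (f := fun k => d (k + 1)) ENNReal.summable]
    rw [← add_assoc]
  -- tail sum
  have hsummable : Summable (fun k => poissonPMFReal q (k + 2)) :=
    (summable_nat_add_iff 2).mpr (poissonPMFRealSum q).summable
  have htail : ∑' k, d (k + 2)
      = ENNReal.ofReal (∑' k, poissonPMFReal q (k + 2)) := by
    rw [ENNReal.ofReal_tsum_of_nonneg (fun k => poissonPMFReal_nonneg) hsummable]
    exact tsum_congr e2
  have htailval : ∑' k, poissonPMFReal q (k + 2)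
      = 1 - exp (-(q : ℝ)) - q * exp (-(q : ℝ)) := by
    have h := Summable.sum_add_tsum_nat_add (f := fun k => poissonPMFReal q k) 2
      (poissonPMFRealSum q).summable
    rw [show ∑' i, poissonPMFReal q i = 1 from (poissonPMFRealSum q).tsum_eq] at h
    have h2 : ∑ i ∈ Finset.range 2, poissonPMFReal q i
        = exp (-(q : ℝ)) + q * exp (-(q : ℝ)) := by
      simp [Finset.sum_range_succ, poissonPMFReal]
      ring
    rw [h2] at h
    linarith
  have htailnn : (0 : ℝ) ≤ 1 - exp (-(q : ℝ)) - q * exp (-(q : ℝ)) := by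
    rw [← htailval]
    exact tsum_nonneg fun k => poissonPMFReal_nonneg
  rw [hsplit, e0, e1, htail, htailval,
    ← ENNReal.ofReal_add (by linarith) (by nlinarith),
    ← ENNReal.ofReal_add (by nlinarith) htailnn]
  calc ENNReal.ofReal (exp (-(q:ℝ)) - (1 - q) + ((q:ℝ) - q * exp (-(q:ℝ)))
        + (1 - exp (-(q:ℝ)) - q * exp (-(q:ℝ))))
      ≤ ENNReal.ofReal (2 * (q : ℝ) ^ 2) := by
        apply ENNReal.ofReal_le_ofReal
        nlinarith
    _ = 2 * (q : ℝ≥0∞) ^ 2 := by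
        rw [ENNReal.ofReal_mul (by norm_num), ENNReal.ofReal_pow hq0]
        simp [ENNReal.ofReal_ofNat]







variable {Ω : Type*} [MeasurableSpace Ω] (μ : Measure Ω) [IsProbabilityMeasure μ]

lemma bern_eq {X : Ω → ℕ} (hX : Measurable X) (q : ℝ≥0)
    (hB : ∀ ω, X ω = 0 ∨ X ω = 1) (hq : μ {ω | X ω = 1} = (q : ℝ≥0∞)) :
    (fun k => μ {ω | X ω = k}) = bern q := by
  funext k
  match k with
  | 0 =>
    have hcomp : {ω | X ω = 0} = {ω | X ω = 1}ᶜ := by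
      ext ω
      simp only [Set.mem_setOf_eq, Set.mem_compl_iff]
      rcases hB ω with h | h <;> simp [h]
    have hm : MeasurableSet {ω | X ω = 1} := hX (measurableSet_singleton 1)
    rw [hcomp, measure_compl hm (measure_ne_top μ _), measure_univ, hq]
    rfl
  | 1 => rw [hq]; rfl
  | (m + 2) =>
    have : {ω | X ω = m + 2} = ∅ := by
      ext ω
      simp only [Set.mem_setOf_eq, Set.mem_empty_iff_false, iff_false]
      rcases hB ω with h | h <;> omega
    rw [this, measure_empty]
    simp only [bern]
    rw [if_neg (by omega), if_neg (by omega)]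

omit [IsProbabilityMeasure μ] in
lemma conv_eq {X S : Ω → ℕ} (hX : Measurable X) (hS : Measurable S)
    (hindep : IndepFun X S μ) (k : ℕ) :
    μ {ω | X ω + S ω = k}
      = conv (fun j => μ {ω | X ω = j}) (fun j => μ {ω | S ω = j}) k := by
  have hset : {ω | X ω + S ω = k}
      = ⋃ j ∈ Finset.range (k + 1), ((X ⁻¹' {j}) ∩ (S ⁻¹' {k - j})) := by
    ext ω
    simp only [Set.mem_setOf_eq, Set.mem_iUnion, Finset.mem_range, Set.mem_inter_iff,
      Set.mem_preimage, Set.mem_singleton_iff, exists_prop]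
    constructor
    · intro h
      exact ⟨X ω, by omega, rfl, by omega⟩
    · rintro ⟨j, hj, h1, h2⟩
      omega
  rw [hset, measure_biUnion_finset]
  · refine Finset.sum_congr rfl fun j hj => ?_
    rw [hindep.measure_inter_preimage_eq_mul _ _ (measurableSet_singleton j)
      (measurableSet_singleton _)]
    rfl
  · intro a ha b hb hab
    simp only [Function.onFun, Set.disjoint_left]
    rintro ω ⟨h1, -⟩ ⟨h2, -⟩
    exact hab (by simp only [Set.mem_preimage, Set.mem_singleton_iff] at h1 h2; omega)
  · intro j hj
    exact (hX (measurableSet_singleton j)).inter (hS (measurableSet_singleton _))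


lemma main_induction {Ω : Type*} [MeasurableSpace Ω] (μ : Measure Ω) [IsProbabilityMeasure μ]
    (n : ℕ) (I : Fin n → Ω → ℕ) (p : Fin n → NNReal)
    (hmeas : ∀ i, Measurable (I i))
    (hindep : iIndepFun I μ)
    (hBer : ∀ i ω, I i ω = 0 ∨ I i ω = 1)
    (hp : ∀ i, μ {ω | I i ω = 1} = ENNReal.ofNNReal (p i)) :
    ∀ s : Finset (Fin n),
      dd (fun k => μ {ω | ∑ i ∈ s, I i ω = k}) (pois (∑ i ∈ s, p i))
        ≤ ∑ i ∈ s, 2 * (p i : ℝ≥0∞) ^ 2 := by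
  intro s
  classical
  induction s using Finset.induction with
  | empty =>
    have h0 : (fun k => μ {ω | ∑ i ∈ (∅ : Finset (Fin n)), I i ω = k}) = pois 0 := by
      funext k
      simp only [Finset.sum_empty]
      match k with
      | 0 =>
        have : {ω : Ω | (0 : ℕ) = 0} = Set.univ := by simp
        rw [this, measure_univ]
        simp [pois, poissonPMFReal]
      | (m + 1) =>
        have : {ω : Ω | (0 : ℕ) = m + 1} = ∅ := by simp
        rw [this, measure_empty]
        simp [pois, poissonPMFReal]
    rw [h0, Finset.sum_empty]
    simp [dd, tsub_self]
  | insert i s hi ih =>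
    set q := p i with hqdef
    have hq1 : (q : ℝ≥0∞) ≤ 1 := by
      rw [← hp i]
      exact prob_le_one
    have hq1' : q ≤ 1 := by exact_mod_cast hq1
    have hSmeas : Measurable (fun ω => ∑ j ∈ s, I j ω) :=
      Finset.measurable_sum _ fun j _ => hmeas j
    have hInd : IndepFun (I i) (fun ω => ∑ j ∈ s, I j ω) μ := by
      have h := (hindep.indepFun_finsetSum_of_notMem hmeas hi).symm
      have hfun : (∑ j ∈ s, I j) = (fun ω => ∑ j ∈ s, I j ω) := by
        funext ω; simp
      rwa [hfun] at h
    have hBm : (fun k => μ {ω | I i ω = k}) = bern q :=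
      bern_eq μ (hmeas i) q (hBer i) (hp i)
    have hconv : (fun k => μ {ω | ∑ j ∈ insert i s, I j ω = k})
        = conv (bern q) (fun k => μ {ω | ∑ j ∈ s, I j ω = k}) := by
      funext k
      have hsum : {ω | ∑ j ∈ insert i s, I j ω = k}
          = {ω | I i ω + ∑ j ∈ s, I j ω = k} := by
        ext ω; simp [Finset.sum_insert hi]
      rw [hsum, conv_eq μ (hmeas i) hSmeas hInd k, hBm]
    have hsum_p : ∑ j ∈ insert i s, p j = q + ∑ j ∈ s, p j := Finset.sum_insert hi
    rw [hconv, hsum_p, Finset.sum_insert hi]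
    calc dd (conv (bern q) fun k => μ {ω | ∑ j ∈ s, I j ω = k}) (pois (q + ∑ j ∈ s, p j))
        = dd (conv (bern q) fun k => μ {ω | ∑ j ∈ s, I j ω = k})
            (conv (pois q) (pois (∑ j ∈ s, p j))) := by
          rw [pois_conv]
      _ ≤ dd (conv (bern q) fun k => μ {ω | ∑ j ∈ s, I j ω = k})
            (conv (bern q) (pois (∑ j ∈ s, p j)))
          + dd (conv (bern q) (pois (∑ j ∈ s, p j)))
            (conv (pois q) (pois (∑ j ∈ s, p j))) :=
          dd_triangle _ _ _
      _ ≤ (∑' m, bern q m) * dd (fun k => μ {ω | ∑ j ∈ s, I j ω = k}) (pois (∑ j ∈ s, p j))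
          + dd (bern q) (pois q) * ∑' m, pois (∑ j ∈ s, p j) m :=
          add_le_add (dd_conv_left _ _ _) (dd_conv_right _ _ _)
      _ = dd (fun k => μ {ω | ∑ j ∈ s, I j ω = k}) (pois (∑ j ∈ s, p j))
            + dd (bern q) (pois q) := by
          rw [tsum_bern q hq1', tsum_pois, one_mul, mul_one]
      _ ≤ (∑ j ∈ s, 2 * (p j : ℝ≥0∞) ^ 2) + 2 * (q : ℝ≥0∞) ^ 2 :=
          add_le_add ih (dd_bern_pois q hq1')
      _ = 2 * (q : ℝ≥0∞) ^ 2 + ∑ j ∈ s, 2 * (p j : ℝ≥0∞) ^ 2 := add_comm _ _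

end LeCamAux

open LeCamAux in
theorem stmt_2 {Ω : Type*} [MeasurableSpace Ω] (μ : Measure Ω) [IsProbabilityMeasure μ]
    (n : ℕ) (I : Fin n → Ω → ℕ) (p : Fin n → NNReal)
    (hmeas : ∀ i, Measurable (I i))
    (hindep : iIndepFun I μ)
    (hBer : ∀ i ω, I i ω = 0 ∨ I i ω = 1)
    (hp : ∀ i, μ {ω | I i ω = 1} = ENNReal.ofNNReal (p i)) :
    ∀ A : Set ℕ,
      |(μ.map (fun ω => ∑ i, I i ω) A).toReal - (poissonMeasure (∑ i, p i) A).toReal| ≤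
        2 * ∑ i, (p i : ℝ) ^ 2 := by
  intro A
  classical
  have hS : Measurable (fun ω => ∑ i, I i ω) := Finset.measurable_sum _ fun i _ => hmeas i
  set F : ℕ → ℝ≥0∞ := fun k => μ {ω | ∑ i, I i ω = k} with hF
  set G : ℕ → ℝ≥0∞ := fun k => pois (∑ i, p i) k with hG
  have key : dd F G ≤ ∑ i, 2 * (p i : ℝ≥0∞) ^ 2 :=
    main_induction μ n I p hmeas hindep hBer hp Finset.univ
  have hAmeas : MeasurableSet A := MeasurableSpace.measurableSet_top
  -- values of the two measures on A
  have hx : μ.map (fun ω => ∑ i, I i ω) A = ∑' k, A.indicator F k := by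
    rw [← Measure.tsum_indicator_apply_singleton _ A hAmeas]
    refine tsum_congr fun k => ?_
    unfold Set.indicator
    split
    · beta_reduce
      rw [Measure.map_apply hS (measurableSet_singleton k)]
      rfl
    · rfl
  have hy : poissonMeasure (∑ i, p i) A = ∑' k, A.indicator G k := by
    rw [← Measure.tsum_indicator_apply_singleton _ A hAmeas]
    refine tsum_congr fun k => ?_
    unfold Set.indicator
    split
    · beta_reduce
      rw [poissonMeasure_singleton]
      rfl
    · rfl
  -- bound difference of sums
  have hdiff : ∀ (f g : ℕ → ℝ≥0∞),
      (∑' k, A.indicator f k) - (∑' k, A.indicator g k) ≤ dd f g := by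
    intro f g
    rw [dd, tsub_le_iff_right, ← ENNReal.tsum_add]
    refine ENNReal.tsum_le_tsum fun k => ?_
    unfold Set.indicator
    split
    · calc f k ≤ ((f k - g k) + (g k - f k)) + g k := by
            calc f k ≤ (f k - g k) + g k := le_tsub_add
              _ ≤ _ := add_le_add_left (le_add_right le_rfl) _
        _ = _ := rfl
    · simp
  have hxfin : μ.map (fun ω => ∑ i, I i ω) A ≠ ∞ := measure_ne_top _ _
  have hyfin : poissonMeasure (∑ i, p i) A ≠ ∞ := measure_ne_top _ _
  have hBfin : (∑ i, 2 * (p i : ℝ≥0∞) ^ 2) ≠ ∞ := by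
    refine (ENNReal.sum_lt_top.mpr fun i _ => ?_).ne
    exact ENNReal.mul_lt_top (by norm_num) (ENNReal.pow_lt_top ENNReal.coe_lt_top)
  have hBtoReal : (∑ i, 2 * (p i : ℝ≥0∞) ^ 2).toReal = 2 * ∑ i, (p i : ℝ) ^ 2 := by
    rw [ENNReal.toReal_sum (fun i _ => by
      exact (ENNReal.mul_lt_top (by norm_num) (ENNReal.pow_lt_top ENNReal.coe_lt_top)).ne)]
    rw [Finset.mul_sum]
    refine Finset.sum_congr rfl fun i _ => ?_
    rw [ENNReal.toReal_mul, ENNReal.toReal_pow]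
    norm_num
  set x := μ.map (fun ω => ∑ i, I i ω) A with hxdef
  set y := poissonMeasure (∑ i, p i) A with hydef
  rcases le_total x y with hxy | hxy
  · have h1 : |x.toReal - y.toReal| = (y - x).toReal := by
      rw [abs_sub_comm, ENNReal.toReal_sub_of_le hxy hyfin]
      rw [abs_of_nonneg]
      have := ENNReal.toReal_mono hyfin hxy
      linarith
    rw [h1, ← hBtoReal]
    refine ENNReal.toReal_mono hBfin ?_
    calc y - x ≤ dd G F := by rw [hy, hx]; exact hdiff G F
      _ = dd F G := by rw [dd, dd]; exact tsum_congr fun k => add_comm _ _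
      _ ≤ _ := key
  · have h1 : |x.toReal - y.toReal| = (x - y).toReal := by
      rw [ENNReal.toReal_sub_of_le hxy hxfin]
      rw [abs_of_nonneg]
      have := ENNReal.toReal_mono hxfin hxy
      linarith
    rw [h1, ← hBtoReal]
    refine ENNReal.toReal_mono hBfin ?_
    calc x - y ≤ dd F G := by rw [hx, hy]; exact hdiff F G
      _ ≤ _ := key
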